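/- arXiv:1908.07128 — 3 statements merged into one kernel-verified Lean document; each statement's English description precedes it below -/
import Mathlib

section
/- With d = 2cos(π/7), the 3×3 real matrix S₃ with rows (1, d, d² − 1), (d, −(d² − 1), 1), (d² − 1, 1, −d) is symmetric and satisfies S₃ · S₃ᵀ = (1 + d² + (d² − 1)²) · I₃. -/
/-- `d = 2 cos(π/7)`. -/
noncomputable def d : ℝ := 2 * Real.cos (Real.pi / 7)

/-- The 3×3 real matrix with rows `(1, d, d²−1)`, `(d, −(d²−1), 1)`, `(d²−1, 1, −d)`. -/
noncomputable def S₃ : Matrix (Fin 3) (Fin 3) ℝ :=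
  !![1, d, d ^ 2 - 1;
     d, -(d ^ 2 - 1), 1;
     d ^ 2 - 1, 1, -d]

lemma cos_pi_div_seven_cubic :
    8 * Real.cos (Real.pi / 7) ^ 3 - 4 * Real.cos (Real.pi / 7) ^ 2
      - 4 * Real.cos (Real.pi / 7) + 1 = 0 := by
  set c := Real.cos (Real.pi / 7) with hc
  have h4 : Real.cos (4 * (Real.pi / 7)) = -Real.cos (3 * (Real.pi / 7)) := by
    have : (4 : ℝ) * (Real.pi / 7) = Real.pi - 3 * (Real.pi / 7) := by ring
    rw [this, Real.cos_pi_sub]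
  have h3 : Real.cos (3 * (Real.pi / 7)) = 4 * c ^ 3 - 3 * c := Real.cos_three_mul _
  have h2 : Real.cos (2 * (Real.pi / 7)) = 2 * c ^ 2 - 1 := Real.cos_two_mul _
  have h4' : Real.cos (4 * (Real.pi / 7)) = 2 * (2 * c ^ 2 - 1) ^ 2 - 1 := by
    have : (4 : ℝ) * (Real.pi / 7) = 2 * (2 * (Real.pi / 7)) := by ring
    rw [this, Real.cos_two_mul, h2]
  have key : 8 * c ^ 4 + 4 * c ^ 3 - 8 * c ^ 2 - 3 * c + 1 = 0 := by
    have := h4'.symm.trans h4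
    rw [h3] at this
    nlinarith [this]
  have hpos : c + 1 > 0 := by
    have hpi := Real.pi_pos
    have : 0 < c := Real.cos_pos_of_mem_Ioo ⟨by linarith, by linarith⟩
    linarith
  have hfac : (c + 1) * (8 * c ^ 3 - 4 * c ^ 2 - 4 * c + 1) = 0 := by nlinarith [key]
  rcases mul_eq_zero.mp hfac with h | h
  · linarith
  · exact h

lemma d_cubic : d ^ 3 - d ^ 2 - 2 * d + 1 = 0 := by
  have := cos_pi_div_seven_cubic
  unfold d
  nlinarith [this]

theorem S₃_symm_orthogonal :
    S₃.IsSymm ∧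
    S₃ * S₃.transpose
      = (1 + d ^ 2 + (d ^ 2 - 1) ^ 2) • (1 : Matrix (Fin 3) (Fin 3) ℝ) := by
  have hd := d_cubic
  constructor
  · ext i j
    fin_cases i <;> fin_cases j <;> simp [S₃, Matrix.transpose_apply]
  · ext i j
    fin_cases i <;> fin_cases j <;>
      simp [S₃, Matrix.mul_apply, Fin.sum_univ_three, Matrix.one_apply,
        Matrix.smul_apply, Matrix.transpose_apply, Matrix.vecHead, Matrix.vecTail] <;> nlinarith [hd]
end

section
/- With α = e^{iπ/9}, the three complex numbers r₁ = −α − α² + α⁵, r₂ = α + α² − α⁴, r₃ = α⁴ − α⁵ are pairwise distinct real numbers and each is a root of the polynomial x³ − 3x + 1. -/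
/-- `α = e^{iπ/9}`. -/
noncomputable def α : ℂ := Complex.exp (Real.pi * Complex.I / 9)

noncomputable def r₁ : ℂ := -α - α ^ 2 + α ^ 5
noncomputable def r₂ : ℂ := α + α ^ 2 - α ^ 4
noncomputable def r₃ : ℂ := α ^ 4 - α ^ 5

lemma alpha_pow_nine : α ^ 9 = -1 := by
  rw [α, ← Complex.exp_nat_mul]
  rw [show (9 : ℕ) * (↑Real.pi * Complex.I / 9) = ↑Real.pi * Complex.I by push_cast; ring]
  exact Complex.exp_pi_mul_I

lemma alpha_cube : α ^ 3 = 1 / 2 + ((Real.sqrt 3 : ℝ) : ℂ) / 2 * Complex.I := by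
  rw [α, ← Complex.exp_nat_mul]
  rw [show (3 : ℕ) * (↑Real.pi * Complex.I / 9) = (↑(Real.pi / 3) : ℂ) * Complex.I by
    push_cast; ring]
  rw [Complex.exp_mul_I, ← Complex.ofReal_cos, ← Complex.ofReal_sin]
  rw [Real.cos_pi_div_three, Real.sin_pi_div_three]
  push_cast
  ring

lemma h6 : α ^ 6 = α ^ 3 - 1 := by
  have h3 := alpha_cube
  have hs : ((Real.sqrt 3 : ℝ) : ℂ) ^ 2 = 3 := by
    rw [← Complex.ofReal_pow, Real.sq_sqrt (by norm_num : (0:ℝ) ≤ 3)]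
    norm_num
  have hI := Complex.I_sq
  linear_combination (α ^ 3 - 1 / 2 + ((Real.sqrt 3 : ℝ) : ℂ) / 2 * Complex.I) * h3 +
    (Complex.I ^ 2 / 4) * hs + (3 / 4 : ℂ) * hI

lemma conj_alpha : (starRingEnd ℂ) α = -α ^ 8 := by
  have hβ : α * (starRingEnd ℂ) α = 1 := by
    rw [α, ← Complex.exp_conj, ← Complex.exp_add]
    rw [show (↑Real.pi * Complex.I / 9 + (starRingEnd ℂ) (↑Real.pi * Complex.I / 9)) = 0 by
      simp [map_div₀, Complex.conj_I, map_ofNat]; ring]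
    exact Complex.exp_zero
  have h9 := alpha_pow_nine
  linear_combination ((starRingEnd ℂ) α) * h9 - α ^ 8 * hβ

theorem r_distinct_real_roots :
    (r₁ ≠ r₂ ∧ r₁ ≠ r₃ ∧ r₂ ≠ r₃) ∧
    (r₁.im = 0 ∧ r₂.im = 0 ∧ r₃.im = 0) ∧
    (r₁ ^ 3 - 3 * r₁ + 1 = 0 ∧ r₂ ^ 3 - 3 * r₂ + 1 = 0 ∧ r₃ ^ 3 - 3 * r₃ + 1 = 0) := by
  have h := h6
  have hc := conj_alpha
  -- roots
  have p1 : r₁ ^ 3 - 3 * r₁ + 1 = 0 := by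
    rw [r₁]; linear_combination (1 + 3*α + 3*α^2 - 3*α^5 - 2*α^6 + α^9) * h
  have p2 : r₂ ^ 3 - 3 * r₂ + 1 = 0 := by
    rw [r₂]; linear_combination (1 - 3*α - 3*α^2 + 2*α^3 + 3*α^4 - α^6) * h
  have p3 : r₃ ^ 3 - 3 * r₃ + 1 = 0 := by
    rw [r₃]; linear_combination (1 + α^3 - 3*α^4 + 3*α^5 - 3*α^7 + 3*α^8 - α^9) * h
  -- squaring relations
  have s1 : r₁ ^ 2 - 2 = r₂ := by
    rw [r₁, r₂]; linear_combination (-2 - α + α^4) * h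
  have s2 : r₂ ^ 2 - 2 = r₃ := by
    rw [r₂, r₃]; linear_combination (-2 + α^2) * h
  have s3 : r₃ ^ 2 - 2 = r₁ := by
    rw [r₃, r₁]; linear_combination (-2 + α + α^2 - 2*α^3 + α^4) * h
  -- reality
  have i1 : r₁.im = 0 := by
    rw [← Complex.conj_eq_iff_im]
    rw [r₁]
    simp only [map_add, map_sub, map_neg, map_pow, hc]
    linear_combination (α + α^2 + α^4 - α^10 - α^13 - α^16 + α^22 + α^25 - α^31 - α^34) * h
  have i2 : r₂.im = 0 := by
    rw [← Complex.conj_eq_iff_im]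
    rw [r₂]
    simp only [map_add, map_sub, map_neg, map_pow, hc]
    linear_combination (-α - α^2 - α^5 + α^7 - α^8 + α^10 + α^14 + α^17 - α^23 - α^26) * h
  have i3 : r₃.im = 0 := by
    rw [← Complex.conj_eq_iff_im]
    rw [r₃]
    simp only [map_add, map_sub, map_neg, map_pow, hc]
    linear_combination (-α^4 + α^5 - α^7 + α^8 + α^13 - α^14 + α^16 - α^17 - α^22 + α^23 - α^25 + α^26 + α^31 + α^34) * h
  -- distinctness
  have key : ∀ r : ℂ, r ^ 3 - 3 * r + 1 = 0 → r ^ 2 - r - 2 ≠ 0 := by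
    intro r hp hq
    have : (3 : ℂ) = 0 := by linear_combination hp - (r + 1) * hq
    norm_num at this
  refine ⟨⟨?_, ?_, ?_⟩, ⟨i1, i2, i3⟩, ⟨p1, p2, p3⟩⟩
  · intro h'; exact key r₁ p1 (by linear_combination s1 - h')
  · intro h'; exact key r₃ p3 (by linear_combination s3 + h')
  · intro h'; exact key r₂ p2 (by linear_combination s2 - h')
end

section
/- Over ℝ one has the factorization x³ − 3x + 1 = (x − 2cos(2π/9)) · (x − 2cos(4π/9)) · (x − 2cos(8π/9)). -/
open Polynomial

theorem cubic_factorization :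
    (X ^ 3 - 3 * X + 1 : ℝ[X])
      = (X - C (2 * Real.cos (2 * Real.pi / 9)))
        * (X - C (2 * Real.cos (4 * Real.pi / 9)))
        * (X - C (2 * Real.cos (8 * Real.pi / 9))) := by
  set a := 2 * Real.cos (2 * Real.pi / 9) with ha_def
  set b := 2 * Real.cos (4 * Real.pi / 9) with hb_def
  set c := 2 * Real.cos (8 * Real.pi / 9) with hc_def
  have hpi := Real.pi_pos
  -- cos(2π/3) = -1/2
  have hc23 : Real.cos (2 * Real.pi / 3) = -(1/2) := by
    have h := Real.cos_pi_sub (Real.pi / 3)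
    rw [Real.cos_pi_div_three] at h
    rw [show 2 * Real.pi / 3 = Real.pi - Real.pi / 3 by ring, h]
  have ha : a ^ 3 - 3 * a + 1 = 0 := by
    have h := Real.cos_three_mul (2 * Real.pi / 9)
    rw [show 3 * (2 * Real.pi / 9) = 2 * Real.pi / 3 by ring, hc23] at h
    rw [ha_def]; nlinarith [h]
  have hb : b ^ 3 - 3 * b + 1 = 0 := by
    have h := Real.cos_three_mul (4 * Real.pi / 9)
    have h2 : Real.cos (3 * (4 * Real.pi / 9)) = -(1/2) := by
      rw [show 3 * (4 * Real.pi / 9) = 2 * Real.pi - 2 * Real.pi / 3 by ring,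
        Real.cos_two_pi_sub, hc23]
    rw [h2] at h
    rw [hb_def]; nlinarith [h]
  have hc : c ^ 3 - 3 * c + 1 = 0 := by
    have h := Real.cos_three_mul (8 * Real.pi / 9)
    have h2 : Real.cos (3 * (8 * Real.pi / 9)) = -(1/2) := by
      rw [show 3 * (8 * Real.pi / 9) = 2 * Real.pi / 3 + 2 * Real.pi by ring,
        Real.cos_add_two_pi, hc23]
    rw [h2] at h
    rw [hc_def]; nlinarith [h]
  -- distinctness
  have hab : a ≠ b := by
    have : Real.cos (4 * Real.pi / 9) < Real.cos (2 * Real.pi / 9) := by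
      apply Real.cos_lt_cos_of_nonneg_of_le_pi (by positivity) (by linarith) (by linarith)
    rw [ha_def, hb_def]; intro h; linarith
  have hbc : b ≠ c := by
    have : Real.cos (8 * Real.pi / 9) < Real.cos (4 * Real.pi / 9) := by
      apply Real.cos_lt_cos_of_nonneg_of_le_pi (by positivity) (by linarith) (by linarith)
    rw [hb_def, hc_def]; intro h; linarith
  have hac : a ≠ c := by
    have : Real.cos (8 * Real.pi / 9) < Real.cos (2 * Real.pi / 9) := by
      apply Real.cos_lt_cos_of_nonneg_of_le_pi (by positivity) (by linarith) (by linarith)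
    rw [ha_def, hc_def]; intro h; linarith
  -- symmetric functions
  have hab2 : a ^ 2 + a * b + b ^ 2 = 3 := by
    have h : (a - b) * (a ^ 2 + a * b + b ^ 2) = (a - b) * 3 := by
      linear_combination ha - hb
    exact mul_left_cancel₀ (sub_ne_zero.mpr hab) h
  have hbc2 : b ^ 2 + b * c + c ^ 2 = 3 := by
    have h : (b - c) * (b ^ 2 + b * c + c ^ 2) = (b - c) * 3 := by
      linear_combination hb - hc
    exact mul_left_cancel₀ (sub_ne_zero.mpr hbc) h
  have e1 : a + b + c = 0 := by
    have h : (a - c) * (a + b + c) = (a - c) * 0 := by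
      linear_combination hab2 - hbc2
    exact mul_left_cancel₀ (sub_ne_zero.mpr hac) h
  have e2 : a * b + b * c + c * a = -3 := by
    linear_combination (a + b) * e1 - hab2
  have e3 : a * b * c = -1 := by
    linear_combination (ha + hb + hc)/3 + (1 - (a^2 + b^2 + c^2 - a*b - b*c - a*c)/3) * e1
  have expand : (X - C a) * (X - C b) * (X - C c)
      = X ^ 3 - C (a + b + c) * X ^ 2 + C (a * b + b * c + c * a) * X - C (a * b * c) := by
    simp only [map_add, map_mul]
    ring
  rw [expand, e1, e2, e3]
  simp only [map_zero, map_neg, map_ofNat, map_one]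
  ring
end
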